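/- In the three-spin model, the non-overlap distribution for the all-zero overlap configuration σ̃ (σ̃_i = 0 for all i) satisfies μ^{σ̃}(ω) = Z_{σ̃}⁻¹ exp(J₁₂𝟙[ω₁=ω₂] + J₂₃𝟙[ω₂=ω₃]), where Z_{σ̃} = 2(e^{J₁₂+J₂₃} + e^{J₁₂} + e^{J₂₃} + 1). -/

import Mathlib

lemma sum_pm (g : (Fin 3 → ℤ) → ℝ) :
  ∑ ω ∈ Fintype.piFinset (fun _ : Fin 3 => ({-1,1} : Finset ℤ)), g ω =
    g ![-1,-1,-1] + g ![-1,-1,1] + g ![-1,1,-1] + g ![-1,1,1]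
    + g ![1,-1,-1] + g ![1,-1,1] + g ![1,1,-1] + g ![1,1,1] := by
  have h : Fintype.piFinset (fun _ : Fin 3 => ({-1,1} : Finset ℤ)) =
    ({![-1,-1,-1], ![-1,-1,1], ![-1,1,-1], ![-1,1,1],
      ![1,-1,-1], ![1,-1,1], ![1,1,-1], ![1,1,1]} : Finset (Fin 3 → ℤ)) := by decide
  rw [h]
  rw [Finset.sum_insert (by decide), Finset.sum_insert (by decide),
      Finset.sum_insert (by decide), Finset.sum_insert (by decide),
      Finset.sum_insert (by decide), Finset.sum_insert (by decide),
      Finset.sum_insert (by decide), Finset.sum_singleton]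
  ring

/-- The non-overlap distribution of the three-spin model for the all-zero overlap
configuration `σ̃` is the symmetrized Gibbs measure
`μ^{σ̃}(ω) = Z_{σ̃}⁻¹ exp(J₁₂𝟙[ω₁=ω₂] + J₂₃𝟙[ω₂=ω₃])`. -/
theorem stmt_9 (J12 J23 : ℝ) :
    let S : Finset ℤ := {-1, 1}
    let Ωc := Fintype.piFinset fun _ : Fin 3 => S
    let Z : ℝ := 2 * (2 + Real.exp J12 + Real.exp J23)
    let μ : (Fin 3 → ℤ) → ℝ := fun ω =>
      Real.exp (J12 * (if ω 0 = -1 ∧ ω 1 = -1 then 1 else 0)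
        + J23 * (if ω 1 = 1 ∧ ω 2 = 1 then 1 else 0)) / Z
    let ρ : ℝ := ∑ ω ∈ Ωc, μ ω * μ fun i => -ω i
    let Zσ : ℝ := 2 * (Real.exp (J12 + J23) + Real.exp J12 + Real.exp J23 + 1)
    ∀ ω ∈ Ωc,
      μ ω * (μ fun i => -ω i) / ρ =
        Real.exp (J12 * (if ω 0 = ω 1 then 1 else 0)
          + J23 * (if ω 1 = ω 2 then 1 else 0)) / Zσ := by
  intro S Ωc Z μ ρ Zσ ω hω
  have hZ : (0:ℝ) < Z := by
    have := Real.exp_pos J12; have := Real.exp_pos J23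
    simp only [Z]; nlinarith
  have hZσ : (0:ℝ) < Zσ := by
    have := Real.exp_pos (J12 + J23); have := Real.exp_pos J12; have := Real.exp_pos J23
    simp only [Zσ]; nlinarith
  have key : ∀ τ ∈ Ωc, μ τ * (μ fun i => -τ i) =
      Real.exp (J12 * (if τ 0 = τ 1 then 1 else 0)
        + J23 * (if τ 1 = τ 2 then 1 else 0)) / (Z * Z) := by
    intro τ hτ
    simp only [Ωc, S, Fintype.mem_piFinset, Finset.mem_insert, Finset.mem_singleton] at hτ
    have h0 := hτ 0; have h1 := hτ 1; have h2 := hτ 2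
    simp only [μ]
    rw [div_mul_div_comm, ← Real.exp_add]
    congr 2
    rcases h0 with h0 | h0 <;> rcases h1 with h1 | h1 <;> rcases h2 with h2 | h2 <;>
      norm_num [h0, h1, h2] <;> ring
  have hρ : ρ = Zσ / (Z * Z) := by
    simp only [ρ]
    rw [Finset.sum_congr rfl key]
    rw [show Ωc = Fintype.piFinset (fun _ : Fin 3 => ({-1,1} : Finset ℤ)) from rfl]
    rw [sum_pm (fun τ => Real.exp (J12 * (if τ 0 = τ 1 then 1 else 0)
        + J23 * (if τ 1 = τ 2 then 1 else 0)) / (Z * Z))]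
    simp only [Matrix.cons_val_zero, Matrix.cons_val_one, Matrix.head_cons,
      Matrix.cons_val_two, Matrix.tail_cons]
    rw [← add_div, ← add_div, ← add_div, ← add_div,
      ← add_div, ← add_div, ← add_div]
    congr 1
    simp only [Zσ]
    norm_num [Real.exp_add]
    ring
  rw [hρ, key ω hω]
  rw [div_div_div_cancel_right₀]
  positivity
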